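/- Let E be a commutative ring and σ : E → E a ring endomorphism. Suppose there exist an integer n ≥ 1 and idempotents e_0, …, e_{n−1} ∈ E with e_i·e_j = 0 for i ≠ j and e_0 + ⋯ + e_{n−1} = 1, such that for each i the ring E·e_i (a commutative ring with unit e_i) is a field and σ(e_i) = e_{(i+1) mod n}. Then the fixed subring E^σ := { x ∈ E : σ(x) = x } is a field. -/
import Mathlib


noncomputable section

/-- The fixed subring `E^σ = { x ∈ E | σ x = x }` of a ring endomorphism. -/
def fixedSubring (E : Type) [CommRing E] (σ : E →+* E) : Subring E where
  carrier := {x | σ x = x}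
  one_mem' := map_one σ
  mul_mem' := fun {a b} ha hb => by
    show σ (a * b) = a * b
    rw [map_mul, ha, hb]
  zero_mem' := map_zero σ
  add_mem' := fun {a b} ha hb => by
    show σ (a + b) = a + b
    rw [map_add, ha, hb]
  neg_mem' := fun {a} ha => by
    show σ (-a) = -a
    rw [map_neg, ha]

/-- If a commutative ring `E` with endomorphism `σ` is a finite product of
fields (cut out by orthogonal idempotents `e 0, …, e (n-1)` summing to `1`) that are
transitively permuted by `σ`, then the fixed subring `E^σ` is a field. -/
theorem statement_1 (E : Type) [CommRing E] (σ : E →+* E)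
    (n : ℕ) (hn : 1 ≤ n) (e : Fin n → E)
    (hidem : ∀ i, e i * e i = e i)
    (horth : ∀ i j, i ≠ j → e i * e j = 0)
    (hsum : ∑ i, e i = 1)
    -- each `E·e i` is a field (a commutative ring with unit `e i`)
    (hfield : ∀ i, e i ≠ 0 ∧
      ∀ x : E, x * e i = x → x ≠ 0 → ∃ y : E, y * e i = y ∧ x * y = e i)
    -- `σ` carries the `i`-th factor to the `(i+1)`-th: `σ (e i) = e (i+1 mod n)`
    (hperm : ∀ i : Fin n, σ (e i) = e ⟨((i : ℕ) + 1) % n, Nat.mod_lt _ (by omega)⟩) :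
    IsField (fixedSubring E σ) := by
  have hE1 : (1 : E) ≠ 0 := by
    intro h
    apply (hfield ⟨0, hn⟩).1
    calc e ⟨0, hn⟩ = e ⟨0, hn⟩ * 1 := (mul_one _).symm
      _ = 0 := by rw [h, mul_zero]
  have key : ∀ x : E, σ x = x → x ≠ 0 → ∃ y : E, σ y = y ∧ x * y = 1 := by
    intro x hx hx0
    have hcomp : ∃ i, x * e i ≠ 0 := by
      by_contra h
      push_neg at h
      apply hx0
      calc x = x * ∑ i, e i := by rw [hsum, mul_one]
        _ = ∑ i, x * e i := Finset.mul_sum _ _ _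
        _ = 0 := by simp [h]
    obtain ⟨i0, hi0⟩ := hcomp
    have step : ∀ i : Fin n, x * e i ≠ 0 →
        x * e ⟨((i : ℕ) + 1) % n, Nat.mod_lt _ (by omega)⟩ ≠ 0 := by
      intro i hne hzero
      have hσ : σ (x * e i) = 0 := by
        rw [map_mul, hx, hperm]; exact hzero
      obtain ⟨y, hy1, hy2⟩ := (hfield i).2 (x * e i) (by rw [mul_assoc, hidem]) hne
      have h0 : σ (e i) = 0 := by rw [← hy2, map_mul, hσ, zero_mul]
      rw [hperm] at h0
      exact (hfield _).1 h0
    have all : ∀ j : Fin n, x * e j ≠ 0 := by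
      have iter : ∀ k : ℕ,
          x * e ⟨((i0 : ℕ) + k) % n, Nat.mod_lt _ (by omega)⟩ ≠ 0 := by
        intro k
        induction k with
        | zero =>
          have : (⟨((i0 : ℕ) + 0) % n, Nat.mod_lt _ (by omega)⟩ : Fin n) = i0 := by
            apply Fin.ext
            simp [Nat.mod_eq_of_lt i0.isLt]
          rw [this]; exact hi0
        | succ k ih =>
          have h := step _ ih
          have heq : (⟨(((i0 : ℕ) + k) % n + 1) % n, Nat.mod_lt _ (by omega)⟩ : Fin n)
              = ⟨((i0 : ℕ) + (k + 1)) % n, Nat.mod_lt _ (by omega)⟩ := by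
            apply Fin.ext
            show (((i0 : ℕ) + k) % n + 1) % n = ((i0 : ℕ) + (k + 1)) % n
            conv_rhs => rw [← Nat.add_assoc, Nat.add_mod ((i0 : ℕ) + k) 1 n]
            rw [Nat.add_mod (((i0 : ℕ) + k) % n) 1 n]
            simp
          rw [heq] at h
          exact h
      intro j
      have h := iter ((j : ℕ) + n - (i0 : ℕ))
      have heq : (⟨((i0 : ℕ) + ((j : ℕ) + n - (i0 : ℕ))) % n, Nat.mod_lt _ (by omega)⟩ : Fin n)
          = j := by
        apply Fin.ext
        show ((i0 : ℕ) + ((j : ℕ) + n - (i0 : ℕ))) % n = (j : ℕ)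
        rw [show (i0 : ℕ) + ((j : ℕ) + n - (i0 : ℕ)) = (j : ℕ) + n by
          have := i0.isLt; omega]
        rw [Nat.add_mod_right, Nat.mod_eq_of_lt j.isLt]
      rw [heq] at h
      exact h
    choose y hy1 hy2 using fun i =>
      (hfield i).2 (x * e i) (by rw [mul_assoc, hidem]) (all i)
    have hxy : x * ∑ i, y i = 1 := by
      rw [Finset.mul_sum]
      have hterm : ∀ i ∈ Finset.univ, x * y i = e i := by
        intro i _
        calc x * y i = x * (y i * e i) := by rw [hy1]
          _ = (x * e i) * y i := by ring
          _ = e i := hy2 i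
      rw [Finset.sum_congr rfl hterm, hsum]
    refine ⟨∑ i, y i, ?_, hxy⟩
    calc σ (∑ i, y i) = σ (∑ i, y i) * (x * ∑ i, y i) := by rw [hxy, mul_one]
      _ = (σ x * σ (∑ i, y i)) * ∑ i, y i := by rw [hx]; ring
      _ = σ (x * ∑ i, y i) * ∑ i, y i := by rw [map_mul]
      _ = ∑ i, y i := by rw [hxy, map_one, one_mul]
  refine ⟨⟨0, 1, ?_⟩, mul_comm, ?_⟩
  · intro h
    exact hE1 (congrArg Subtype.val h).symm
  · intro a ha
    obtain ⟨yy, hσy, hxy⟩ := key a.1 a.2 (fun h => ha (Subtype.ext h))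
    exact ⟨⟨yy, hσy⟩, Subtype.ext hxy⟩

end
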